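/- For each natural number n, the Hermite function ψ_n(x) = (√π · 2^n · n!)^{-1/2} e^{-x²/2} H_n(x), with H_n(x) = (-1)^n e^{x²} (d/dx)^n(e^{-x²}), satisfies the time-independent Schrödinger equation of the harmonic oscillator: -(1/2)·ψ_n''(x) + (1/2)·x²·ψ_n(x) = (n + 1/2)·ψ_n(x) for all x ∈ ℝ. -/

import Mathlib

open Real Polynomial

noncomputable section

/-- Physicists' Hermite polynomials. -/
def physHermite : ℕ → Polynomial ℝ
  | 0 => 1
  | n + 1 => C 2 * X * physHermite n - derivative (physHermite n)

lemma physHermite_succ (n : ℕ) :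
    physHermite (n + 1) = C 2 * X * physHermite n - derivative (physHermite n) := rfl

/-- Derivative recurrence plus ODE, proved jointly by induction. -/
lemma physHermite_deriv_ode (n : ℕ) :
    derivative (physHermite (n + 1)) = C (2 * ((n : ℝ) + 1)) * physHermite n ∧
      derivative (derivative (physHermite (n + 1))) + C (2 * ((n : ℝ) + 1)) * physHermite (n + 1)
        = C 2 * X * derivative (physHermite (n + 1)) := by
  induction n with
  | zero =>
    constructor
    · simp [physHermite_succ, physHermite]
    · simp only [physHermite_succ, physHermite, derivative_one, mul_one, sub_zero,
        derivative_mul, derivative_C, derivative_X, zero_mul, zero_add, mul_one,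
        Nat.cast_zero, zero_add, mul_one, C_mul]
      ring
  | succ n ih =>
    obtain ⟨hd, hp⟩ := ih
    have h2 : derivative (derivative (physHermite (n + 1))) =
        C 2 * X * derivative (physHermite (n + 1))
          - C (2 * ((n : ℝ) + 1)) * physHermite (n + 1) := by
      linear_combination hp
    have hd' : derivative (physHermite (n + 1 + 1)) =
        C (2 * (((n : ℕ) + 1 : ℕ) + 1 : ℝ)) * physHermite (n + 1) := by
      rw [physHermite_succ (n + 1), derivative_sub, derivative_mul, derivative_mul,
        derivative_C, derivative_X, h2]
      push_cast
      simp only [C_mul, C_add, map_ofNat, C_1]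
      ring
    refine ⟨hd', ?_⟩
    rw [hd', derivative_mul, derivative_C, physHermite_succ (n + 1)]
    ring

lemma physHermite_ode (n : ℕ) :
    derivative (derivative (physHermite n)) + C (2 * (n : ℝ)) * physHermite n
      = C 2 * X * derivative (physHermite n) := by
  cases n with
  | zero => simp [physHermite]
  | succ n =>
    have h := (physHermite_deriv_ode n).2
    push_cast at h ⊢
    exact h

/-- Iterated derivatives of the Gaussian. -/
lemma iter_deriv_gaussian (n : ℕ) :
    deriv^[n] (fun t : ℝ => Real.exp (-t ^ 2)) =
      fun x => (-1 : ℝ) ^ n * (aeval x (physHermite n) * Real.exp (-x ^ 2)) := by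
  induction n with
  | zero =>
    funext x
    simp [physHermite]
  | succ n ih =>
    funext x
    rw [Function.iterate_succ_apply', ih]
    have hexp : HasDerivAt (fun x : ℝ => Real.exp (-x ^ 2))
        (Real.exp (-x ^ 2) * (-(2 * x))) x := by
      have h1 : HasDerivAt (fun x : ℝ => -x ^ 2) (-(2 * x)) x := by
        have := (hasDerivAt_pow 2 x).neg
        simp at this; exact this
      exact h1.exp
    have hmul : HasDerivAt (fun x : ℝ => aeval x (physHermite n) * Real.exp (-x ^ 2))
        (aeval x (derivative (physHermite n)) * Real.exp (-x ^ 2)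
          + aeval x (physHermite n) * (Real.exp (-x ^ 2) * (-(2 * x)))) x :=
      ((physHermite n).hasDerivAt_aeval x).mul hexp
    rw [deriv_const_mul _ hmul.differentiableAt, hmul.deriv]
    rw [physHermite_succ]
    simp only [map_sub, map_mul, aeval_X, aeval_C, map_ofNat]
    push_cast
    ring

/-- Derivative of a polynomial times the half-Gaussian. -/
lemma hasDerivAt_poly_halfgauss (p : Polynomial ℝ) (x : ℝ) :
    HasDerivAt (fun x : ℝ => aeval x p * Real.exp (-x ^ 2 / 2))
      (aeval x (derivative p - X * p) * Real.exp (-x ^ 2 / 2)) x := by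
  have hexp : HasDerivAt (fun x : ℝ => Real.exp (-x ^ 2 / 2))
      (Real.exp (-x ^ 2 / 2) * (-x)) x := by
    have h1 : HasDerivAt (fun x : ℝ => -x ^ 2 / 2) (-x) x := by
      have h0 : HasDerivAt (fun x : ℝ => -x ^ 2 / 2) _ x := ((hasDerivAt_pow 2 x).neg).div_const 2
      convert h0 using 1
      norm_num
      ring
    exact h1.exp
  have : HasDerivAt (fun x : ℝ => aeval x p * Real.exp (-x ^ 2 / 2)) _ x :=
    (p.hasDerivAt_aeval x).mul hexp
  convert this using 1
  simp only [map_sub, map_mul, aeval_X]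
  ring

/-- The `n`-th Hermite function
`ψ_n(x) = (√π·2^n·n!)^{-1/2} e^{-x²/2} H_n(x)`, where
`H_n(x) = (-1)^n e^{x²} (d/dx)^n (e^{-x²})`, satisfies the time-independent Schrödinger
equation of the harmonic oscillator:
`-(1/2)·ψ_n''(x) + (1/2)·x²·ψ_n(x) = (n + 1/2)·ψ_n(x)` for all `x ∈ ℝ`. -/
theorem hermite_function_schrodinger (n : ℕ) (H ψ : ℝ → ℝ)
    (hH : ∀ y : ℝ, H y =
      (-1 : ℝ) ^ n * Real.exp (y ^ 2) *
        iteratedDeriv n (fun t : ℝ => Real.exp (-t ^ 2)) y)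
    (hψ : ∀ y : ℝ, ψ y =
      (Real.sqrt π * 2 ^ n * n.factorial) ^ (-(1 / 2 : ℝ)) *
        Real.exp (-y ^ 2 / 2) * H y) :
    ∀ x : ℝ,
      -(1 / 2) * deriv (deriv ψ) x + (1 / 2) * x ^ 2 * ψ x =
        ((n : ℝ) + 1 / 2) * ψ x := by
  intro x
  set c : ℝ := (Real.sqrt π * 2 ^ n * n.factorial) ^ (-(1 / 2 : ℝ)) with hc
  -- H equals the physicists' Hermite polynomial
  have hHpoly : ∀ y : ℝ, H y = aeval y (physHermite n) := by
    intro y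
    rw [hH, iteratedDeriv_eq_iterate, iter_deriv_gaussian]
    have h1 : ((-1 : ℝ) ^ n) * ((-1 : ℝ) ^ n) = 1 := by
      rw [← mul_pow]; norm_num
    have h2 : Real.exp (y ^ 2) * Real.exp (-y ^ 2) = 1 := by
      rw [← Real.exp_add]; norm_num
    calc (-1 : ℝ) ^ n * Real.exp (y ^ 2) *
          ((-1 : ℝ) ^ n * (aeval y (physHermite n) * Real.exp (-y ^ 2)))
        = ((-1 : ℝ) ^ n * (-1 : ℝ) ^ n) * aeval y (physHermite n) *
            (Real.exp (y ^ 2) * Real.exp (-y ^ 2)) := by ring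
      _ = aeval y (physHermite n) := by rw [h1, h2]; ring
  -- closed form for ψ
  have hψfun : ψ = fun y : ℝ => c * (aeval y (physHermite n) * Real.exp (-y ^ 2 / 2)) := by
    funext y
    rw [hψ, hHpoly]
    ring
  set p₁ : Polynomial ℝ := derivative (physHermite n) - X * physHermite n with hp₁
  have hd1 : deriv ψ = fun y : ℝ => c * (aeval y p₁ * Real.exp (-y ^ 2 / 2)) := by
    funext y
    rw [hψfun]
    rw [deriv_const_mul _ (hasDerivAt_poly_halfgauss (physHermite n) y).differentiableAt,
      (hasDerivAt_poly_halfgauss (physHermite n) y).deriv]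
  have hd2 : deriv (deriv ψ) x =
      c * (aeval x (derivative p₁ - X * p₁) * Real.exp (-x ^ 2 / 2)) := by
    rw [hd1]
    rw [deriv_const_mul _ (hasDerivAt_poly_halfgauss p₁ x).differentiableAt,
      (hasDerivAt_poly_halfgauss p₁ x).deriv]
  -- simplify the second-derivative polynomial using the ODE
  have hpoly : derivative p₁ - X * p₁ = (X ^ 2 - C (2 * (n : ℝ)) - 1) * physHermite n := by
    have hode := physHermite_ode n
    rw [hp₁]
    rw [derivative_sub, derivative_mul, derivative_X]
    simp only [C_mul, map_ofNat] at hode ⊢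
    linear_combination hode
  rw [hd2, hpoly, hψfun]
  simp only [map_sub, map_mul, map_one, aeval_X, map_pow, aeval_C,
    Algebra.algebraMap_self, RingHom.id_apply]
  ring
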